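/- Let 0 < h ≤ w and R = [0,w] × [0,h] ⊆ ℝ². If f : ℝ² → ℝ² is a distance-preserving map whose image f''(R) is contained in the horizontal strip {(x,y) | 0 ≤ y ≤ h}, then f''(R) is a horizontal translate of R: there exists t ∈ ℝ with f''(R) = {(x + t, y) | (x,y) ∈ R}. -/

import Mathlib

/-- The Euclidean plane. -/
abbrev Plane := EuclideanSpace ℝ (Fin 2)

/-- The closed axis-aligned rectangle `[0, w] × [0, h]` in the Euclidean plane. -/
def rect (w h : ℝ) : Set Plane :=
  {p | p 0 ∈ Set.Icc 0 w ∧ p 1 ∈ Set.Icc 0 h}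

noncomputable def mk2 (x y : ℝ) : Plane := WithLp.toLp 2 ![x, y]

@[simp] lemma mk2_0 (x y : ℝ) : mk2 x y 0 = x := rfl
@[simp] lemma mk2_1 (x y : ℝ) : mk2 x y 1 = y := rfl

lemma plane_ext {p q : Plane} (h0 : p 0 = q 0) (h1 : p 1 = q 1) : p = q := by
  ext j; fin_cases j <;> assumption

lemma decomp (p : Plane) : p = p 0 • mk2 1 0 + p 1 • mk2 0 1 := by
  apply plane_ext <;> simp [PiLp.add_apply, PiLp.smul_apply]

lemma mem_rect {w h : ℝ} {p : Plane} :
    p ∈ rect w h ↔ (0 ≤ p 0 ∧ p 0 ≤ w) ∧ (0 ≤ p 1 ∧ p 1 ≤ h) := Iff.rfl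

lemma coordj (A : Plane →ₗᵢ[ℝ] Plane) (p : Plane) (j : Fin 2) :
    A p j = p 0 * A (mk2 1 0) j + p 1 * A (mk2 0 1) j := by
  conv_lhs => rw [decomp p]
  rw [map_add, map_smul, map_smul]
  simp [PiLp.add_apply, PiLp.smul_apply]

noncomputable def swapP (p : Plane) : Plane := mk2 (p 1) (p 0)

@[simp] lemma swapP_0 (p : Plane) : swapP p 0 = p 1 := rfl
@[simp] lemma swapP_1 (p : Plane) : swapP p 1 = p 0 := rfl

lemma swapP_mem {s : ℝ} {p : Plane} (hp : p ∈ rect s s) : swapP p ∈ rect s s :=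
  ⟨hp.2, hp.1⟩

lemma swapP_swapP (p : Plane) : swapP (swapP p) = p := plane_ext rfl rfl

lemma image_swap (s : ℝ) (f : Plane → Plane) :
    f '' rect s s = (f ∘ swapP) '' rect s s := by
  ext q; constructor
  · rintro ⟨p, hp, rfl⟩
    exact ⟨swapP p, swapP_mem hp, by simp [Function.comp, swapP_swapP]⟩
  · rintro ⟨p, hp, rfl⟩
    exact ⟨swapP p, swapP_mem hp, rfl⟩

lemma seg (L c a : ℝ) (ha : a = 1 ∨ a = -1) :
    ∃ m, ((m = c ∧ m + L = c + L * a) ∨ (m = c + L * a ∧ m + L = c)) ∧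
      (∀ x, 0 ≤ x → x ≤ L → m ≤ c + x * a ∧ c + x * a ≤ m + L) ∧
      (∀ y, m ≤ y → y ≤ m + L → (0 ≤ a * (y - c) ∧ a * (y - c) ≤ L) ∧ c + (a * (y - c)) * a = y) := by
  rcases ha with rfl | rfl
  · exact ⟨c, Or.inl ⟨rfl, by ring⟩,
      fun x hx hx' => ⟨by linarith, by linarith⟩,
      fun y hy hy' => ⟨⟨by linarith, by linarith⟩, by ring⟩⟩
  · exact ⟨c - L, Or.inr ⟨by ring, by ring⟩,
      fun x hx hx' => ⟨by linarith, by linarith⟩,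
      fun y hy hy' => ⟨⟨by linarith, by linarith⟩, by ring⟩⟩

lemma case_sep (w h : ℝ) (f : Plane → Plane) (a d c0 c1 : ℝ)
    (ha : a = 1 ∨ a = -1) (hd : d = 1 ∨ d = -1)
    (hf0 : ∀ p : Plane, f p 0 = c0 + p 0 * a)
    (hf1 : ∀ p : Plane, f p 1 = c1 + p 1 * d)
    (hlo : 0 ≤ c1) (hhi : c1 ≤ h) (hlo' : 0 ≤ c1 + h * d) (hhi' : c1 + h * d ≤ h) :
    ∃ t : ℝ, f '' rect w h = {q : Plane | (t ≤ q 0 ∧ q 0 ≤ t + w) ∧ (0 ≤ q 1 ∧ q 1 ≤ h)} := by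
  obtain ⟨t, _, hfw0, hbw0⟩ := seg w c0 a ha
  obtain ⟨m, hm, hfw1, hbw1⟩ := seg h c1 d hd
  have hm0 : m = 0 := by rcases hm with ⟨e1, e2⟩ | ⟨e1, e2⟩ <;> linarith
  subst hm0
  refine ⟨t, ?_⟩
  ext q
  simp only [Set.mem_image, Set.mem_setOf_eq]
  constructor
  · rintro ⟨p, hp, rfl⟩
    obtain ⟨⟨h1, h2⟩, h3, h4⟩ := mem_rect.mp hp
    rw [hf0, hf1]
    refine ⟨hfw0 _ h1 h2, ?_⟩
    have := hfw1 _ h3 h4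
    constructor <;> linarith [this.1, this.2]
  · rintro ⟨⟨hq0, hq0'⟩, hq1, hq1'⟩
    obtain ⟨⟨hx, hx'⟩, hxe⟩ := hbw0 (q 0) hq0 hq0'
    obtain ⟨⟨hy, hy'⟩, hye⟩ := hbw1 (q 1) (by linarith) (by linarith)
    refine ⟨mk2 (a * (q 0 - c0)) (d * (q 1 - c1)), mem_rect.mpr ⟨⟨by simpa using hx, by simpa using hx'⟩, ⟨by simpa using hy, by simpa using hy'⟩⟩, ?_⟩
    apply plane_ext
    · rw [hf0]; simpa using hxe
    · rw [hf1]; simpa using hye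

lemma rhs_eq (w h t : ℝ) :
    {q : Plane | ∃ p ∈ rect w h, q 0 = p 0 + t ∧ q 1 = p 1} =
      {q : Plane | (t ≤ q 0 ∧ q 0 ≤ t + w) ∧ (0 ≤ q 1 ∧ q 1 ≤ h)} := by
  ext q
  simp only [Set.mem_setOf_eq]
  constructor
  · rintro ⟨p, hp, e0, e1⟩
    obtain ⟨⟨h1, h2⟩, h3, h4⟩ := mem_rect.mp hp
    exact ⟨⟨by linarith, by linarith⟩, by rw [e1]; exact ⟨h3, h4⟩⟩
  · rintro ⟨⟨h1, h2⟩, h3, h4⟩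
    exact ⟨mk2 (q 0 - t) (q 1), mem_rect.mpr ⟨⟨by simpa using (by linarith : (0:ℝ) ≤ q 0 - t), by simpa using (by linarith : q 0 - t ≤ w)⟩, ⟨by simpa using h3, by simpa using h4⟩⟩, by simp, by simp⟩

set_option maxHeartbeats 1000000 in
theorem isometry_rect_in_strip_is_horizontal_translate (w h : ℝ) (hh : 0 < h) (hhw : h ≤ w)
    (f : Plane → Plane) (hf : Isometry f)
    (hsub : f '' rect w h ⊆ {p : Plane | p 1 ∈ Set.Icc 0 h}) :
    ∃ t : ℝ, f '' rect w h = {q : Plane | ∃ p ∈ rect w h, q 0 = p 0 + t ∧ q 1 = p 1} := by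
  obtain ⟨a, b, c, d, c0, c1, coord0, coord1, n1, n2, n3⟩ :
      ∃ a b c d c0 c1 : ℝ, (∀ p : Plane, f p 0 = c0 + p 0 * a + p 1 * c) ∧
        (∀ p : Plane, f p 1 = c1 + p 0 * b + p 1 * d) ∧
        a ^ 2 + b ^ 2 = 1 ∧ c ^ 2 + d ^ 2 = 1 ∧ a * c + b * d = 0 := by
    obtain ⟨A, hA⟩ : ∃ A : Plane →ₗᵢ[ℝ] Plane, ∀ p : Plane, f p = A p + f 0 := by
      let F := hf.affineIsometryOfStrictConvexSpace
      refine ⟨F.linearIsometry, fun p => ?_⟩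
      have h := F.map_vadd 0 p
      simpa [F] using h
    refine ⟨A (mk2 1 0) 0, A (mk2 1 0) 1, A (mk2 0 1) 0, A (mk2 0 1) 1, f 0 0, f 0 1,
      ?_, ?_, ?_, ?_, ?_⟩
    · intro p; rw [hA p, PiLp.add_apply, coordj]; ring
    · intro p; rw [hA p, PiLp.add_apply, coordj]; ring
    · have h := A.inner_map_map (mk2 1 0) (mk2 1 0)
      simp only [PiLp.inner_apply, RCLike.inner_apply, conj_trivial, Fin.sum_univ_two,
        mk2_0, mk2_1] at h
      nlinarith [h]
    · have h := A.inner_map_map (mk2 0 1) (mk2 0 1)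
      simp only [PiLp.inner_apply, RCLike.inner_apply, conj_trivial, Fin.sum_univ_two,
        mk2_0, mk2_1] at h
      nlinarith [h]
    · have h := A.inner_map_map (mk2 1 0) (mk2 0 1)
      simp only [PiLp.inner_apply, RCLike.inner_apply, conj_trivial, Fin.sum_univ_two,
        mk2_0, mk2_1] at h
      linarith [h]
  have b2d2 : b ^ 2 + d ^ 2 = 1 := by
    have h4 : a * c = -(b * d) := by linarith
    have h5 : (a * c) ^ 2 = (b * d) ^ 2 := by rw [h4]; ring
    nlinarith [n1, n2, h5]
  -- corner constraints
  have K : ∀ x y : ℝ, 0 ≤ x → x ≤ w → 0 ≤ y → y ≤ h →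
      0 ≤ c1 + x * b + y * d ∧ c1 + x * b + y * d ≤ h := by
    intro x y hx hx' hy hy'
    have hmem : mk2 x y ∈ rect w h := mem_rect.mpr ⟨⟨by simpa using hx, by simpa using hx'⟩,
      ⟨by simpa using hy, by simpa using hy'⟩⟩
    have := hsub ⟨mk2 x y, hmem, rfl⟩
    simp only [Set.mem_setOf_eq, Set.mem_Icc] at this
    rw [coord1] at this
    simpa using this
  have K00 := K 0 0 le_rfl (by linarith) le_rfl hh.le
  have Kw0 := K w 0 (by linarith) le_rfl le_rfl hh.le
  have K0h := K 0 h le_rfl (by linarith) hh.le le_rfl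
  have Kwh := K w h (by linarith) le_rfl hh.le le_rfl
  simp only [zero_mul, mul_zero, add_zero] at K00 Kw0 K0h Kwh
  by_cases hb : b = 0
  · -- axis-preserving case
    subst hb
    have hd1 : d = 1 ∨ d = -1 := by
      have : (d - 1) * (d + 1) = 0 := by nlinarith [b2d2]
      rcases mul_eq_zero.mp this with h' | h'
      · left; linarith
      · right; linarith
    have hc : c = 0 := by
      have : c ^ 2 = 0 := by nlinarith [n2, b2d2]
      exact pow_eq_zero_iff (by norm_num) |>.mp this
    have ha1 : a = 1 ∨ a = -1 := by
      have : (a - 1) * (a + 1) = 0 := by nlinarith [n1]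
      rcases mul_eq_zero.mp this with h' | h'
      · left; linarith
      · right; linarith
    have hf0 : ∀ p : Plane, f p 0 = c0 + p 0 * a := by
      intro p; rw [coord0 p, hc]; ring
    have hf1 : ∀ p : Plane, f p 1 = c1 + p 1 * d := by
      intro p; rw [coord1 p]; ring
    obtain ⟨t, ht⟩ := case_sep w h f a d c0 c1 ha1 hd1 hf0 hf1 K00.1 K00.2
      (by linarith [K0h.1]) (by linarith [K0h.2])
    exact ⟨t, by rw [ht, rhs_eq]⟩
  · -- rotated case: forces w = h and a quarter-turn
    have e : w * |b| + h * |d| ≤ h := by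
      rcases le_or_gt 0 b with hb' | hb' <;> rcases le_or_gt 0 d with hd' | hd'
      · rw [abs_of_nonneg hb', abs_of_nonneg hd']
        nlinarith [K00.1, Kwh.2]
      · rw [abs_of_nonneg hb', abs_of_neg hd']
        nlinarith [K0h.1, Kw0.2]
      · rw [abs_of_neg hb', abs_of_nonneg hd']
        nlinarith [Kw0.1, K0h.2]
      · rw [abs_of_neg hb', abs_of_neg hd']
        nlinarith [Kwh.1, K00.2]
    have habs2 : |b| ^ 2 + |d| ^ 2 = 1 := by rw [sq_abs, sq_abs]; exact b2d2
    have hsum : |b| + |d| ≤ 1 := by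
      nlinarith [e, mul_nonneg (sub_nonneg.mpr hhw) (abs_nonneg b), abs_nonneg d, hh]
    have hs2 : (|b| + |d|) ^ 2 ≤ 1 := by nlinarith [hsum, abs_nonneg b, abs_nonneg d]
    have hprod : |b| * |d| ≤ 0 := by nlinarith [habs2, hs2]
    have hd0 : d = 0 := by
      by_contra hdne
      have h1 : 0 < |b| := abs_pos.mpr hb
      have h2 : 0 < |d| := abs_pos.mpr hdne
      nlinarith [mul_pos h1 h2]
    subst hd0
    have hb2 : b ^ 2 = 1 := by nlinarith [b2d2]
    have hb1 : b = 1 ∨ b = -1 := by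
      have : (b - 1) * (b + 1) = 0 := by nlinarith [hb2]
      rcases mul_eq_zero.mp this with h' | h'
      · left; linarith
      · right; linarith
    have habs1 : |b| = 1 := by rcases hb1 with rfl | rfl <;> norm_num
    have hwh : w = h := by
      rw [habs1, abs_zero] at e
      linarith
    subst hwh
    have ha0 : a = 0 := by
      have : a ^ 2 = 0 := by nlinarith [n1, hb2]
      exact pow_eq_zero_iff (by norm_num) |>.mp this
    have hc1' : c = 1 ∨ c = -1 := by
      have hc2 : c ^ 2 = 1 := by nlinarith [n2]
      have : (c - 1) * (c + 1) = 0 := by nlinarith [hc2]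
      rcases mul_eq_zero.mp this with h' | h'
      · left; linarith
      · right; linarith
    have hg0 : ∀ p : Plane, (f ∘ swapP) p 0 = c0 + p 0 * c := by
      intro p
      simp only [Function.comp_apply]
      rw [coord0, ha0]
      simp [swapP]
    have hg1 : ∀ p : Plane, (f ∘ swapP) p 1 = c1 + p 1 * b := by
      intro p
      simp only [Function.comp_apply]
      rw [coord1]
      simp [swapP]
    obtain ⟨t, ht⟩ := case_sep w w (f ∘ swapP) c b c0 c1 hc1' hb1 hg0 hg1 K00.1 K00.2
      (by linarith [Kw0.1]) (by linarith [Kw0.2])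
    refine ⟨t, ?_⟩
    rw [image_swap, ht, rhs_eq]
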